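/- arXiv:hep-th/9802033 — 3 statements merged into one kernel-verified Lean document; each statement's English description precedes it below -/
import Mathlib

section
/- Let a, a_D ∈ ℂ with a ≠ 0 and let (p₁,q₁), (p₂,q₂) ∈ ℤ × ℤ with p₁q₂ − p₂q₁ ≠ 0. If |（p₁+p₂)a + (q₁+q₂)a_D| = |p₁·a + q₁·a_D| + |p₂·a + q₂·a_D| and all three quantities are nonzero, then Im(a_D/a) = 0. -/
open Complex

theorem decay_threshold_implies_marginal_stability (a aD : ℂ) (ha : a ≠ 0)
    (p₁ q₁ p₂ q₂ : ℤ) (hnl : p₁ * q₂ - p₂ * q₁ ≠ 0)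
    (h1 : (p₁ : ℂ) * a + (q₁ : ℂ) * aD ≠ 0)
    (h2 : (p₂ : ℂ) * a + (q₂ : ℂ) * aD ≠ 0)
    (h3 : ((p₁ + p₂ : ℤ) : ℂ) * a + ((q₁ + q₂ : ℤ) : ℂ) * aD ≠ 0)
    (hsat : ‖((p₁ + p₂ : ℤ) : ℂ) * a + ((q₁ + q₂ : ℤ) : ℂ) * aD‖
      = ‖(p₁ : ℂ) * a + (q₁ : ℂ) * aD‖
        + ‖(p₂ : ℂ) * a + (q₂ : ℂ) * aD‖) :
    (aD / a).im = 0 := by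
  set z₁ : ℂ := (p₁ : ℂ) * a + (q₁ : ℂ) * aD with hz1
  set z₂ : ℂ := (p₂ : ℂ) * a + (q₂ : ℂ) * aD with hz2
  have hray : SameRay ℝ z₁ z₂ := by
    rw [sameRay_iff_norm_add]
    have : z₁ + z₂ = ((p₁ + p₂ : ℤ) : ℂ) * a + ((q₁ + q₂ : ℤ) : ℂ) * aD := by
      push_cast [hz1, hz2]; ring
    simpa [this] using hsat
  obtain ⟨r, s, hr, hs, hrs⟩ := hray.exists_pos h1 h2
  set w : ℂ := aD / a with hw
  have haD : aD = w * a := by rw [hw, div_mul_cancel₀ aD ha]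
  have key : (r : ℂ) * ((p₁ : ℂ) + (q₁ : ℂ) * w) = (s : ℂ) * ((p₂ : ℂ) + (q₂ : ℂ) * w) := by
    have hrs' : (r : ℂ) * z₁ = (s : ℂ) * z₂ := by
      rw [← Complex.real_smul, ← Complex.real_smul]; exact hrs
    rw [hz1, hz2, haD] at hrs'
    apply mul_right_cancel₀ ha
    linear_combination hrs'
  have him : (r * q₁ - s * q₂) * w.im = 0 := by
    have := congrArg Complex.im key
    simp [Complex.mul_im, Complex.add_im, Complex.mul_re] at this
    nlinarith [this]
  by_contra hwim
  have hq : r * q₁ = s * q₂ := by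
    rcases mul_eq_zero.1 him with h | h
    · linarith
    · exact absurd h hwim
  have hre : r * p₁ + (r * q₁) * w.re = s * p₂ + (s * q₂) * w.re := by
    have := congrArg Complex.re key
    simp [Complex.mul_re, Complex.add_re, Complex.mul_im] at this
    nlinarith [this]
  have hp : r * p₁ = s * p₂ := by
    rw [hq] at hre; linarith
  have hzero : ((p₁ * q₂ - p₂ * q₁ : ℤ) : ℝ) * (r * s) = 0 := by
    push_cast
    linear_combination (s * (q₂:ℝ)) * hp - (s * (p₂:ℝ)) * hq
  have : ((p₁ * q₂ - p₂ * q₁ : ℤ) : ℝ) = 0 := by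
    rcases mul_eq_zero.1 hzero with h | h
    · exact h
    · nlinarith [mul_pos hr hs]
  exact hnl (by exact_mod_cast this)
end

section
/- Let a₀, d₀, a₃ ∈ ℂ with a₀ ≠ 0, and set c₂ = 2a₀ + d₀ ≠ 0 and c₃ = a₃ − a₀ ≠ 0. Suppose d₀/a₀ is real with −2 < d₀/a₀, and c₂/|c₂| = c₃/|c₃|. Then a₃/a₀ is real and a₃/a₀ > 1. -/
open Complex

theorem wboson_base_point_condition (a₀ d₀ a₃ : ℂ) (ha : a₀ ≠ 0)
    (h₂ : 2 * a₀ + d₀ ≠ 0) (h₃ : a₃ - a₀ ≠ 0)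
    (hreal : (d₀ / a₀).im = 0) (hgt : -2 < (d₀ / a₀).re)
    (hphase : (2 * a₀ + d₀) / (‖2 * a₀ + d₀‖ : ℂ)
      = (a₃ - a₀) / (‖a₃ - a₀‖ : ℂ)) :
    (a₃ / a₀).im = 0 ∧ 1 < (a₃ / a₀).re := by
  set r : ℝ := (d₀ / a₀).re with hr
  have hd : d₀ / a₀ = (r : ℂ) := by
    apply Complex.ext <;> simp [hreal, hr]
  set k : ℝ := ‖a₃ - a₀‖ / ‖2 * a₀ + d₀‖ with hkdef
  have hk : 0 < k := div_pos (norm_pos_iff.mpr h₃) (norm_pos_iff.mpr h₂)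
  have hc2 : (‖2 * a₀ + d₀‖ : ℂ) ≠ 0 := by
    simp [Complex.ofReal_ne_zero, h₂]
  have hc3 : (‖a₃ - a₀‖ : ℂ) ≠ 0 := by
    simpa [Complex.ofReal_ne_zero, sub_ne_zero] using h₃
  have key : a₃ - a₀ = (2 * a₀ + d₀) * (k : ℂ) := by
    rw [div_eq_div_iff hc2 hc3] at hphase
    rw [hkdef]
    push_cast
    rw [mul_div_assoc', eq_div_iff hc2]
    linear_combination -hphase
  have key2 : a₃ / a₀ = ((1 + (2 + r) * k : ℝ) : ℂ) := by
    have : a₃ / a₀ = 1 + (2 + d₀ / a₀) * (k : ℂ) := by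
      field_simp
      linear_combination key
    rw [this, hd]; push_cast; ring
  constructor
  · rw [key2]; simp
  · rw [key2]
    simp only [Complex.ofReal_re]
    nlinarith
end

section
/- Let n ∈ ℤ with n ≥ 2, let a₀, d₀ ∈ ℂ with a₀ ≠ 0, and define c₁ = (1−n)·d₀ and c₂ = n·(2a₀ + d₀), both nonzero. If c₁/|c₁| = c₂/|c₂|, then d₀/a₀ is real and −2 < d₀/a₀ < 0. -/
open Complex

theorem hypermultiplet_junction_on_curve (n : ℤ) (hn : 2 ≤ n)
    (a₀ d₀ : ℂ) (ha : a₀ ≠ 0)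
    (h₁ : ((1 - n : ℤ) : ℂ) * d₀ ≠ 0)
    (h₂ : (n : ℂ) * (2 * a₀ + d₀) ≠ 0)
    (hphase : ((1 - n : ℤ) : ℂ) * d₀ / (‖((1 - n : ℤ) : ℂ) * d₀‖ : ℂ)
      = (n : ℂ) * (2 * a₀ + d₀) / (‖(n : ℂ) * (2 * a₀ + d₀)‖ : ℂ)) :
    (d₀ / a₀).im = 0 ∧ -2 < (d₀ / a₀).re ∧ (d₀ / a₀).re < 0 := by
  set A := ‖((1 - n : ℤ) : ℂ) * d₀‖ with hAdef
  set B := ‖(n : ℂ) * (2 * a₀ + d₀)‖ with hBdef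
  have hA : (0:ℝ) < A := norm_pos_iff.mpr h₁
  have hB : (0:ℝ) < B := norm_pos_iff.mpr h₂
  have hA' : (A:ℂ) ≠ 0 := by exact_mod_cast hA.ne'
  have hB' : (B:ℂ) ≠ 0 := by exact_mod_cast hB.ne'
  rw [div_eq_div_iff hA' hB'] at hphase
  have hm : (2:ℝ) ≤ (n:ℝ) := by exact_mod_cast hn
  set D : ℝ := B * (1 - (n:ℝ)) - A * (n:ℝ) with hD
  have hDneg : D < 0 := by nlinarith
  have hD' : ((D:ℝ):ℂ) ≠ 0 := by exact_mod_cast hDneg.ne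
  have hkey : d₀ * ((D:ℝ):ℂ) = ((2*A*(n:ℝ) : ℝ):ℂ) * a₀ := by
    rw [hD]
    push_cast
    push_cast at hphase
    linear_combination hphase
  have hd : d₀ / a₀ = ((2*A*(n:ℝ)/D : ℝ):ℂ) := by
    rw [Complex.ofReal_div, div_eq_div_iff ha hD']
    linear_combination hkey
  rw [hd]
  refine ⟨Complex.ofReal_im _, ?_, ?_⟩
  · rw [Complex.ofReal_re, lt_div_iff_of_neg hDneg]
    nlinarith
  · rw [Complex.ofReal_re]
    exact div_neg_of_pos_of_neg (by nlinarith) hDneg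
end
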